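/- arXiv:1402.0065 — 3 statements merged into one kernel-verified Lean document; each statement's English description precedes it below -/
import Mathlib

section
/- Let f : ℕ → ℂ and define F(k) = ∑_{i=0}^{k} (k choose i) f(i). Then for all m, n ∈ ℕ, ∑_{i=0}^{n} (n choose i) f(m+i) = ∑_{i=0}^{m} (m choose i) (−1)^{m−i} F(n+i). -/
open Finset

lemma pascal_sum (g : ℕ → ℂ) (n : ℕ) :
    ∑ i ∈ range (n + 2), ((n+1).choose i : ℂ) * g i
      = (∑ i ∈ range (n + 1), (n.choose i : ℂ) * g i)
        + ∑ i ∈ range (n + 1), (n.choose i : ℂ) * g (i + 1) := by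
  rw [Finset.sum_range_succ' (fun i => ((n+1).choose i : ℂ) * g i) (n+1)]
  have h1 : ∀ i : ℕ, (((n+1).choose (i+1) : ℕ) : ℂ)
      = (n.choose i : ℂ) + (n.choose (i+1) : ℂ) := by
    intro i; rw [Nat.choose_succ_succ]; push_cast; ring
  simp only [h1, add_mul]
  rw [Finset.sum_add_distrib]
  have h2 : ∑ i ∈ range (n + 1), (n.choose (i+1) : ℂ) * g (i + 1)
      = ∑ i ∈ range n, (n.choose (i+1) : ℂ) * g (i + 1) := by
    rw [Finset.sum_range_succ, Nat.choose_succ_self]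
    simp
  rw [h2, Finset.sum_range_succ' (fun i => (n.choose i : ℂ) * g i) n]
  simp
  ring

theorem gould_quaintance (f F : ℕ → ℂ)
    (hF : ∀ k, F k = ∑ i ∈ Finset.range (k + 1), (k.choose i : ℂ) * f i) (m n : ℕ) :
    ∑ i ∈ Finset.range (n + 1), (n.choose i : ℂ) * f (m + i) =
      ∑ i ∈ Finset.range (m + 1), (m.choose i : ℂ) * (-1 : ℂ) ^ (m - i) * F (n + i) := by
  induction m generalizing n with
  | zero => simp [hF]
  | succ m ih =>
      have hL : ∑ i ∈ range (n + 1), (n.choose i : ℂ) * f (m + 1 + i)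
          = (∑ i ∈ range (n + 2), ((n+1).choose i : ℂ) * f (m + i))
            - ∑ i ∈ range (n + 1), (n.choose i : ℂ) * f (m + i) := by
        rw [pascal_sum (fun i => f (m + i)) n]
        have hD : ∑ i ∈ range (n + 1), (n.choose i : ℂ) * f (m + 1 + i)
            = ∑ i ∈ range (n + 1), (n.choose i : ℂ) * f (m + (i + 1)) :=
          Finset.sum_congr rfl fun i _ => by rw [show m + 1 + i = m + (i + 1) by omega]
        rw [hD]; ring
      rw [hL, ih (n+1), ih n]
      have hP : ∑ i ∈ range (m + 2), ((m+1).choose i : ℂ)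
            * (-1 : ℂ) ^ (m + 1 - i) * F (n + i)
          = (∑ i ∈ range (m + 1), (m.choose i : ℂ)
              * ((-1 : ℂ) ^ (m + 1 - i) * F (n + i)))
            + ∑ i ∈ range (m + 1), (m.choose i : ℂ)
              * ((-1 : ℂ) ^ (m + 1 - (i + 1)) * F (n + (i + 1))) := by
        simp only [mul_assoc]
        exact pascal_sum (fun i => (-1 : ℂ) ^ (m + 1 - i) * F (n + i)) m
      have e1 : ∑ i ∈ range (m + 1), (m.choose i : ℂ)
            * ((-1 : ℂ) ^ (m + 1 - i) * F (n + i))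
          = - ∑ i ∈ range (m + 1), (m.choose i : ℂ) * (-1 : ℂ) ^ (m - i) * F (n + i) := by
        rw [← Finset.sum_neg_distrib]
        apply Finset.sum_congr rfl
        intro i hi
        have hi' : i ≤ m := by simpa [Nat.lt_succ_iff] using Finset.mem_range.mp hi
        rw [show m + 1 - i = (m - i) + 1 by omega, pow_succ]
        ring
      have e2 : ∑ i ∈ range (m + 1), (m.choose i : ℂ)
            * ((-1 : ℂ) ^ (m + 1 - (i + 1)) * F (n + (i + 1)))
          = ∑ i ∈ range (m + 1), (m.choose i : ℂ) * (-1 : ℂ) ^ (m - i) * F (n + 1 + i) := by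
        apply Finset.sum_congr rfl
        intro i hi
        rw [show m + 1 - (i + 1) = m - i by omega, show n + (i + 1) = n + 1 + i by omega]
        ring
      rw [show m + 1 + 1 = m + 2 from rfl, hP, e1, e2]
      ring
end

section
/- Let f : ℕ → ℂ with f(0) ≠ 0. Then the symmetric identity (−1)^n ∑_{i=0}^{n} (n choose i) f(m+i) = (−1)^m ∑_{i=0}^{m} (m choose i) f(n+i) holds for all m, n ∈ ℕ if and only if ∑_{i=0}^{k} (k choose i) f(i) = (−1)^k f(k) for all k ∈ ℕ. -/
lemma sum_pascal_rec (f : ℕ → ℂ) (m n : ℕ) :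
    ∑ i ∈ Finset.range (n + 2), ((n + 1).choose i : ℂ) * f (m + i) =
      (∑ i ∈ Finset.range (n + 1), (n.choose i : ℂ) * f (m + i)) +
        ∑ i ∈ Finset.range (n + 1), (n.choose i : ℂ) * f (m + 1 + i) := by
  rw [Finset.sum_range_succ' _ (n + 1)]
  have h : ∀ i, ((n + 1).choose (i + 1) : ℂ) * f (m + (i + 1)) =
      (n.choose (i + 1) : ℂ) * f (m + (i + 1)) + (n.choose i : ℂ) * f (m + 1 + i) := by
    intro i
    have : m + 1 + i = m + (i + 1) := by omega
    rw [this, Nat.choose_succ_succ]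
    push_cast
    ring
  rw [Finset.sum_congr rfl (fun i _ => h i), Finset.sum_add_distrib]
  rw [Finset.sum_range_succ' (fun i => (n.choose i : ℂ) * f (m + i)) n]
  rw [Finset.sum_range_succ (fun i => (n.choose (i + 1) : ℂ) * f (m + (i + 1))) n]
  simp only [Nat.choose_succ_self, Nat.cast_zero, zero_mul, add_zero, Nat.choose_zero_right,
    Nat.cast_one, one_mul, Nat.add_zero]
  ring

theorem symmetric_identity_iff (f : ℕ → ℂ) (hf : f 0 ≠ 0) :
    (∀ m n : ℕ,
        (-1 : ℂ) ^ n * ∑ i ∈ Finset.range (n + 1), (n.choose i : ℂ) * f (m + i) =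
          (-1 : ℂ) ^ m * ∑ i ∈ Finset.range (m + 1), (m.choose i : ℂ) * f (n + i)) ↔
      (∀ k : ℕ, ∑ i ∈ Finset.range (k + 1), (k.choose i : ℂ) * f i = (-1 : ℂ) ^ k * f k) := by
  constructor
  · intro h k
    have hk := h 0 k
    simp only [pow_zero, one_mul, zero_add] at hk
    have h2 : ∑ i ∈ Finset.range (0 + 1), ((0 : ℕ).choose i : ℂ) * f (k + i) = f k := by
      simp
    rw [h2] at hk
    have h1 : ((-1 : ℂ) ^ k) * ((-1 : ℂ) ^ k) = 1 := by
      rw [← pow_add]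
      exact Even.neg_one_pow ⟨k, rfl⟩
    rw [← hk, ← mul_assoc, h1, one_mul]
  · intro h m n
    induction m generalizing n with
    | zero =>
      simp only [zero_add, pow_zero, one_mul]
      have h2 : ∑ i ∈ Finset.range (0 + 1), ((0 : ℕ).choose i : ℂ) * f (n + i) = f n := by
        simp
      rw [h2, h n, ← mul_assoc, ← pow_add]
      rw [Even.neg_one_pow ⟨n, rfl⟩, one_mul]
    | succ m ih =>
      have e1 := ih n
      have e2 := ih (n + 1)
      have rec3 := sum_pascal_rec f m n
      rw [show n + 2 = n + 1 + 1 from rfl] at rec3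
      rw [rec3] at e2
      have key := sum_pascal_rec f n m
      rw [show m + 2 = m + 1 + 1 from rfl] at key
      rw [key]
      linear_combination (-1 : ℂ) * e1 - e2
end

section
/- For any f : ℕ → ℂ and s ∈ ℕ, ∑_{i=0}^{s} (s choose i) (−1)^{s−i} B_{s−i} f(i) = ∑_{i=0}^{s} (s choose i) B_{s−i} F(i), where F(i) = ∑_{j=0}^{i} (i choose j) f(j) and B_k is the k-th Bernoulli number. -/
open Finset

lemma sumB (n : ℕ) : ∑ k ∈ Finset.range (n + 1), (n.choose k : ℚ) * bernoulli k
    = (-1 : ℚ) ^ n * bernoulli n := by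
  rw [Finset.sum_range_succ, sum_bernoulli, Nat.choose_self]
  rcases eq_or_ne n 1 with rfl | h
  · norm_num
  · rw [if_neg h]
    rcases Nat.even_or_odd n with he | ho
    · simp [he.neg_one_pow]
    · rcases eq_or_ne n 0 with rfl | h0
      · norm_num
      · rw [bernoulli, bernoulli'_eq_zero_of_odd ho
          (by omega)]
        ring

lemma innerSum (s j : ℕ) (hj : j ≤ s) :
    ∑ i ∈ Finset.range (s + 1),
      (s.choose i : ℚ) * bernoulli (s - i) * (i.choose j) =
    (s.choose j : ℚ) * (-1 : ℚ) ^ (s - j) * bernoulli (s - j) := by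
  have hsub : Finset.Ico j (s + 1) ⊆ Finset.range (s + 1) := by
    intro x hx; rw [Finset.mem_Ico] at hx; exact Finset.mem_range.mpr hx.2
  rw [← Finset.sum_subset hsub]
  · rw [Finset.sum_Ico_eq_sum_range]
    have hr : s + 1 - j = (s - j) + 1 := by omega
    rw [hr]
    have : ∀ k ∈ Finset.range (s - j + 1),
        (s.choose (j + k) : ℚ) * bernoulli (s - (j + k)) * ((j + k).choose j)
        = (s.choose j : ℚ) * (((s - j).choose k : ℚ) * bernoulli (s - j - k)) := by
      intro k hk
      rw [Finset.mem_range] at hk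
      have h1 : j + k ≤ s := by omega
      have h2 : j ≤ j + k := by omega
      have := Nat.choose_mul (n := s) h2
      have hc : (s.choose (j + k) : ℚ) * ((j + k).choose j : ℚ)
          = (s.choose j : ℚ) * ((s - j).choose (j + k - j) : ℚ) := by
        exact_mod_cast congrArg (Nat.cast : ℕ → ℚ) this
      have hs1 : s - (j + k) = s - j - k := by omega
      have hs2 : j + k - j = k := by omega
      rw [hs1]
      rw [hs2] at hc
      calc (s.choose (j + k) : ℚ) * bernoulli (s - j - k) * ((j + k).choose j)
          = ((s.choose (j + k) : ℚ) * ((j + k).choose j)) * bernoulli (s - j - k) := by ring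
        _ = ((s.choose j : ℚ) * ((s - j).choose k : ℚ)) * bernoulli (s - j - k) := by rw [hc]
        _ = _ := by ring
    rw [Finset.sum_congr rfl this, ← Finset.mul_sum]
    have hrev : ∑ k ∈ Finset.range (s - j + 1),
        ((s - j).choose k : ℚ) * bernoulli (s - j - k)
        = ∑ k ∈ Finset.range (s - j + 1), ((s - j).choose k : ℚ) * bernoulli k := by
      rw [← Finset.sum_range_reflect]
      apply Finset.sum_congr rfl
      intro k hk
      rw [Finset.mem_range] at hk
      have h1 : s - j + 1 - 1 - k = s - j - k := by omega
      have h2 : s - j - (s - j - k) = k := by omega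
      rw [h1, Nat.choose_symm (by omega : k ≤ s - j), h2]
    rw [hrev, sumB]
    ring
  · intro i hi hni
    rw [Finset.mem_range] at hi
    rw [Finset.mem_Ico] at hni
    have : i < j := by omega
    rw [Nat.choose_eq_zero_of_lt this]
    push_cast
    ring

theorem bernoulli_transform_symmetry (f F : ℕ → ℂ)
    (hF : ∀ i, F i = ∑ j ∈ Finset.range (i + 1), (i.choose j : ℂ) * f j) (s : ℕ) :
    ∑ i ∈ Finset.range (s + 1),
        (s.choose i : ℂ) * (-1 : ℂ) ^ (s - i) * (bernoulli (s - i) : ℂ) * f i =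
      ∑ i ∈ Finset.range (s + 1), (s.choose i : ℂ) * (bernoulli (s - i) : ℂ) * F i := by
  have hext : ∀ i ∈ Finset.range (s + 1),
      (s.choose i : ℂ) * (bernoulli (s - i) : ℂ) * F i
      = ∑ j ∈ Finset.range (s + 1),
          (s.choose i : ℂ) * (bernoulli (s - i) : ℂ) * ((i.choose j : ℂ) * f j) := by
    intro i hi
    rw [Finset.mem_range] at hi
    rw [hF i, Finset.mul_sum]
    rw [← Finset.sum_subset (Finset.range_subset_range.mpr (by omega : i + 1 ≤ s + 1))]
    intro j hj hnj
    rw [Finset.mem_range] at hj hnj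
    rw [Nat.choose_eq_zero_of_lt (show i < j by omega)]
    ring
  rw [Finset.sum_congr rfl hext, Finset.sum_comm]
  apply Finset.sum_congr rfl
  intro j hj
  rw [Finset.mem_range] at hj
  have key := innerSum s j (by omega)
  have keyC : ∑ i ∈ Finset.range (s + 1),
      (s.choose i : ℂ) * (bernoulli (s - i) : ℂ) * (i.choose j : ℂ) =
      (s.choose j : ℂ) * (-1 : ℂ) ^ (s - j) * (bernoulli (s - j) : ℂ) := by
    have := congrArg (RingHom.comp (algebraMap ℚ ℂ) (RingHom.id ℚ)) key
    push_cast at key ⊢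
    exact_mod_cast congrArg (algebraMap ℚ ℂ) key
  calc (s.choose j : ℂ) * (-1 : ℂ) ^ (s - j) * (bernoulli (s - j) : ℂ) * f j
      = (∑ i ∈ Finset.range (s + 1),
          (s.choose i : ℂ) * (bernoulli (s - i) : ℂ) * (i.choose j : ℂ)) * f j := by rw [keyC]
    _ = _ := by rw [Finset.sum_mul]; apply Finset.sum_congr rfl; intro i _; ring
end
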